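/- Suppose that S ∪ (−S) equals the entire unit sphere of ℝ^m. Then there exists a constant C > 0 depending only on d = m + n and p such that for almost every m×n real matrix B there exists Q₀ > 0 with the property that for all Q ≥ Q₀ one has inf{γ_{(B;Q)}(Bk) : k ∈ ℤ^n ∩ (0, Q^{1/n}]^n} ≤ C · Q^{−1/m}. -/

import Mathlib

open MeasureTheory
open scoped ENNReal

/-- The `L^p` norm of a vector in `ℝ^ι`, for `p ∈ [1,∞]` (junk values otherwise). -/
noncomputable def lpNorm (p : ℝ≥0∞) {ι : Type*} [Fintype ι] (x : ι → ℝ) : ℝ :=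
  ‖(WithLp.equiv p (ι → ℝ)).symm x‖

/-- The Euclidean (`L²`) norm of a vector. -/
noncomputable def euclNorm {ι : Type*} [Fintype ι] (x : ι → ℝ) : ℝ :=
  Real.sqrt (∑ i, x i ^ 2)

/-- `cone(S) = {c • u : u ∈ S, c > 0}`. -/
def cone {m : ℕ} (S : Set (Fin m → ℝ)) : Set (Fin m → ℝ) :=
  {y | ∃ u ∈ S, ∃ c : ℝ, 0 < c ∧ y = c • u}

/-- `S` is an open subset of the unit (Euclidean) sphere of `ℝ^m`. -/
def IsOpenSubsetOfSphere {m : ℕ} (S : Set (Fin m → ℝ)) : Prop :=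
  ∃ U : Set (Fin m → ℝ), IsOpen U ∧ S = U ∩ {u | euclNorm u = 1}

/-- Matrix-vector multiplication, with the matrix given as `Fin m → Fin n → ℝ`. -/
def matVec {m n : ℕ} (B : Fin m → Fin n → ℝ) (x : Fin n → ℝ) : Fin m → ℝ :=
  fun i => ∑ j, B i j * x j

/-- The gap function `γ_{(B;Q)}(v)`: the infimum of `‖Bk + l − v‖_p` over
`k ∈ ℤ^n ∩ (0, Q^{1/n}]^n`, `l ∈ ℤ^m` with `Bk + l − v ∈ cone S`;
the infimum of the empty set is `∞`. -/
noncomputable def gap (p : ℝ≥0∞) {m n : ℕ} (S : Set (Fin m → ℝ))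
    (B : Fin m → Fin n → ℝ) (Q : ℝ) (v : Fin m → ℝ) : ℝ≥0∞ :=
  ⨅ (k : Fin n → ℤ) (_ : ∀ i, 0 < (k i : ℝ) ∧ (k i : ℝ) ≤ Q ^ ((n : ℝ)⁻¹))
    (l : Fin m → ℤ)
    (_ : (matVec B (fun j => (k j : ℝ)) + (fun i => (l i : ℝ)) - v) ∈ cone S),
    ENNReal.ofReal (lpNorm p (matVec B (fun j => (k j : ℝ)) + (fun i => (l i : ℝ)) - v))

/-- **Theorem 1(c), upper bound.** If `S ∪ (−S)` is the whole unit sphere of `ℝ^m`, then there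
is a constant `C > 0` depending only on `d = m + n` and `p` such that for almost every `m×n`
real matrix `B` there is `Q₀ > 0` with
`inf{γ_{(B;Q)}(Bk) : k ∈ ℤ^n ∩ (0, Q^{1/n}]^n} ≤ C · Q^{-1/m}` for all `Q ≥ Q₀`. -/
lemma lpNorm_le_aux (p : ℝ≥0∞) (hp : 1 ≤ p) (m : ℕ) (hm : 1 ≤ m) (x : Fin m → ℝ) (ε : ℝ)
    (hε : 0 ≤ ε) (h : ∀ i, |x i| ≤ ε) : lpNorm p x ≤ m * ε := by
  have hmε : ε ≤ m * ε := le_mul_of_one_le_left hε (by exact_mod_cast hm)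
  rcases eq_or_ne p ⊤ with hp' | hp'
  · subst hp'
    rw [_root_.lpNorm]
    have : Nonempty (Fin m) := ⟨⟨0, hm⟩⟩
    rw [PiLp.norm_eq_ciSup]
    refine le_trans (ciSup_le fun i => ?_) hmε
    simpa [Real.norm_eq_abs] using h i
  · have hpr : 1 ≤ p.toReal := by
      rw [← ENNReal.toReal_one]
      exact ENNReal.toReal_mono hp' hp
    have hpr0 : 0 < p.toReal := lt_of_lt_of_le one_pos hpr
    rw [_root_.lpNorm, PiLp.norm_eq_sum hpr0]
    have hsum : ∑ i, ‖((WithLp.equiv p (Fin m → ℝ)).symm x) i‖ ^ p.toReal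
        ≤ (m : ℝ) * ε ^ p.toReal := by
      calc ∑ i, ‖((WithLp.equiv p (Fin m → ℝ)).symm x) i‖ ^ p.toReal
          ≤ ∑ _i : Fin m, ε ^ p.toReal := by
            refine Finset.sum_le_sum fun i _ => ?_
            refine Real.rpow_le_rpow (norm_nonneg _) ?_ hpr0.le
            simpa [Real.norm_eq_abs] using h i
        _ = (m : ℝ) * ε ^ p.toReal := by simp [mul_comm]
    calc (∑ i, ‖((WithLp.equiv p (Fin m → ℝ)).symm x) i‖ ^ p.toReal) ^ (1 / p.toReal)
        ≤ ((m : ℝ) * ε ^ p.toReal) ^ (1 / p.toReal) := by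
          refine Real.rpow_le_rpow ?_ hsum (by positivity)
          exact Finset.sum_nonneg fun i _ => Real.rpow_nonneg (norm_nonneg _) _
      _ = (m : ℝ) ^ (1 / p.toReal) * ε := by
          rw [Real.mul_rpow (by positivity) (by positivity)]
          congr 1
          rw [← Real.rpow_mul hε, mul_one_div, div_self hpr0.ne', Real.rpow_one]
      _ ≤ (m : ℝ) * ε := by
          refine mul_le_mul_of_nonneg_right ?_ hε
          calc (m : ℝ) ^ (1 / p.toReal) ≤ (m : ℝ) ^ (1 : ℝ) := by
                refine Real.rpow_le_rpow_of_exponent_le (by exact_mod_cast hm) ?_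
                rw [div_le_one hpr0]; exact hpr
            _ = m := Real.rpow_one _

lemma ae_good (m n : ℕ) (hm : 1 ≤ m) :
    ∀ᵐ B : Fin m → Fin n → ℝ ∂volume, ∀ (δ : Fin n → ℤ) (l : Fin m → ℤ), δ ≠ 0 →
      (fun i => matVec B (fun j => (δ j : ℝ)) i + (l i : ℝ)) ≠ 0 := by
  rw [ae_all_iff]
  intro δ
  rw [ae_all_iff]
  intro l
  by_cases hδ : δ = 0
  · exact ae_of_all _ fun B h => absurd hδ h
  set L : (Fin m → Fin n → ℝ) →ₗ[ℝ] (Fin m → ℝ) :=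
    { toFun := fun B => matVec B (fun j => (δ j : ℝ))
      map_add' := by
        intro B₁ B₂
        funext i
        simp [matVec, add_mul, Finset.sum_add_distrib]
      map_smul' := by
        intro c B
        funext i
        simp [matVec, Finset.mul_sum, mul_assoc] } with hL
  have hker : LinearMap.ker L ≠ ⊤ := by
    obtain ⟨j₀, hj₀⟩ := Function.ne_iff.mp hδ
    intro htop
    set B₁ : Fin m → Fin n → ℝ := fun _ j => if j = j₀ then (1:ℝ) else 0 with hB₁def
    have hB₁ : B₁ ∈ LinearMap.ker L := Submodule.eq_top_iff'.mp htop B₁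
    rw [LinearMap.mem_ker] at hB₁
    have h0 : L B₁ ⟨0, hm⟩ = (δ j₀ : ℝ) := by
      simp [hL, matVec, hB₁def, Finset.sum_ite_eq']
    rw [hB₁] at h0
    have : (δ j₀ : ℝ) = 0 := h0.symm
    exact hj₀ (Int.cast_eq_zero.mp this)
  rw [ae_iff]
  have hsub : {B : Fin m → Fin n → ℝ | ¬ (δ ≠ 0 → (fun i => matVec B (fun j => (δ j : ℝ)) i + (l i : ℝ)) ≠ 0)}
      ⊆ {B | L B = fun i => -(l i : ℝ)} := by
    intro B hB
    simp only [Set.mem_setOf_eq, _root_.not_imp, not_not] at hB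
    obtain ⟨-, hB⟩ := hB
    simp only [Set.mem_setOf_eq]
    funext i
    have := congrFun hB i
    simp only [Pi.zero_apply] at this
    simp [hL]
    linarith [this]
  refine measure_mono_null hsub ?_
  by_cases hne : ({B : Fin m → Fin n → ℝ | L B = fun i => -(l i : ℝ)}).Nonempty
  · obtain ⟨B₀, hB₀⟩ := hne
    have heq : {B : Fin m → Fin n → ℝ | L B = fun i => -(l i : ℝ)}
        = (fun B => B + (-B₀)) ⁻¹' (LinearMap.ker L : Set (Fin m → Fin n → ℝ)) := by
      ext B
      simp only [Set.mem_setOf_eq, Set.mem_preimage, SetLike.mem_coe, LinearMap.mem_ker,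
        map_add, map_neg]
      rw [hB₀]
      constructor
      · intro h; rw [h]; abel
      · intro h
        have h2 : L B - (fun i => -(l i : ℝ)) = 0 := by rw [← h]; abel
        exact sub_eq_zero.mp h2
    rw [heq, measure_preimage_add_right]
    exact Measure.addHaar_submodule volume (LinearMap.ker L) hker
  · rw [Set.not_nonempty_iff_eq_empty] at hne
    rw [hne]; exact measure_empty


theorem gap_inf_upper_bound (m n : ℕ) (hm : 1 ≤ m) (hn : 1 ≤ n)
    (p : ℝ≥0∞) (hp : 1 ≤ p) :
    ∃ C > (0 : ℝ), ∀ S : Set (Fin m → ℝ), S.Nonempty → IsOpenSubsetOfSphere S →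
      S ∪ (-S) = {u : Fin m → ℝ | euclNorm u = 1} →
      ∀ᵐ B : Fin m → Fin n → ℝ ∂volume, ∃ Q₀ > (0 : ℝ), ∀ Q ≥ Q₀,
        (⨅ (k : Fin n → ℤ) (_ : ∀ i, 0 < (k i : ℝ) ∧ (k i : ℝ) ≤ Q ^ ((n : ℝ)⁻¹)),
            gap p S B Q (matVec B fun j => (k j : ℝ)))
          ≤ ENNReal.ofReal (C * Q ^ (-(m : ℝ)⁻¹)) := by
  have hm0 : (m:ℝ) ≠ 0 := Nat.cast_ne_zero.mpr (by omega)
  have hn0 : (n:ℝ) ≠ 0 := Nat.cast_ne_zero.mpr (by omega)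
  refine ⟨2 * 4 ^ n * m, by positivity, ?_⟩
  intro S hSne hSopen hSph
  filter_upwards [ae_good m n hm] with B hB
  refine ⟨(2:ℝ) ^ (m + 2 * n), by positivity, ?_⟩
  intro Q hQ
  have hQ0 : (0:ℝ) < Q := lt_of_lt_of_le (by positivity) hQ
  -- basic quantities
  set x : ℝ := Q ^ ((n:ℝ)⁻¹) with hxdef
  have hx0 : 0 < x := Real.rpow_pos_of_pos hQ0 _
  have hx2 : (2:ℝ) ≤ x := by
    have h2n : (2:ℝ) ^ n ≤ Q := by
      refine le_trans ?_ hQ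
      exact pow_le_pow_right₀ one_le_two (by omega)
    calc (2:ℝ) = ((2:ℝ) ^ n) ^ ((n:ℝ)⁻¹) := by
          rw [Real.pow_rpow_inv_natCast (by norm_num) (by omega)]
      _ ≤ x := Real.rpow_le_rpow (by positivity) h2n (by positivity)
  set b : ℝ := Q / 4 ^ n with hbdef
  have hb0 : 0 < b := by positivity
  set y : ℝ := b ^ ((m:ℝ)⁻¹) with hydef
  have hy0 : 0 < y := Real.rpow_pos_of_pos hb0 _
  have hy2 : (2:ℝ) ≤ y := by
    have h2m : (2:ℝ) ^ m ≤ b := by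
      rw [hbdef, le_div_iff₀ (by positivity)]
      calc (2:ℝ) ^ m * 4 ^ n = 2 ^ (m + 2 * n) := by
            rw [pow_add, pow_mul]; norm_num
        _ ≤ Q := hQ
    calc (2:ℝ) = ((2:ℝ) ^ m) ^ ((m:ℝ)⁻¹) := by
          rw [Real.pow_rpow_inv_natCast (by norm_num) (by omega)]
      _ ≤ y := Real.rpow_le_rpow (by positivity) h2m (by positivity)
  set N : ℕ := ⌊x⌋₊ with hNdef
  set M : ℕ := ⌊y⌋₊ with hMdef
  have hM2 : 2 ≤ M := Nat.le_floor (by exact_mod_cast hy2)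
  have hMpos : (0:ℝ) < M := by exact_mod_cast lt_of_lt_of_le two_pos hM2
  have hNx : (N:ℝ) ≤ x := Nat.floor_le hx0.le
  have hMy : (M:ℝ) ≤ y := Nat.floor_le hy0.le
  have hNhalf : x / 2 < N := lt_of_le_of_lt (by linarith) (Nat.sub_one_lt_floor x)
  have hMhalf : y / 2 < M := lt_of_le_of_lt (by linarith) (Nat.sub_one_lt_floor y)
  -- cardinality comparison
  have hcard : M ^ m < N ^ n := by
    have h1 : (M:ℝ) ^ m ≤ b := by
      calc (M:ℝ) ^ m ≤ y ^ m := pow_le_pow_left₀ (by positivity) hMy m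
        _ = b := Real.rpow_inv_natCast_pow hb0.le (by omega)
    have h2 : Q / 2 ^ n < (N:ℝ) ^ n := by
      calc Q / 2 ^ n = (x / 2) ^ n := by
            rw [div_pow, Real.rpow_inv_natCast_pow hQ0.le (by omega)]
        _ < (N:ℝ) ^ n := pow_lt_pow_left₀ hNhalf (by positivity) (by omega)
    have h3 : b < Q / 2 ^ n := by
      rw [hbdef]
      refine div_lt_div_of_pos_left hQ0 (by positivity) ?_
      exact pow_lt_pow_left₀ (by norm_num) (by norm_num) (by omega)
    have : (M:ℝ) ^ m < (N:ℝ) ^ n := lt_of_le_of_lt h1 (lt_trans h3 h2)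
    exact_mod_cast this
  -- pigeonhole
  set κ : (Fin n → Fin N) → Fin n → ℤ := fun k j => ((k j : ℕ) : ℤ) + 1 with hκdef
  have hκcond : ∀ k : Fin n → Fin N, ∀ i, 0 < ((κ k i : ℤ) : ℝ) ∧ ((κ k i : ℤ) : ℝ) ≤ Q ^ ((n:ℝ)⁻¹) := by
    intro k i
    constructor
    · show (0:ℝ) < ((κ k i : ℤ) : ℝ)
      simp only [hκdef]
      push_cast
      positivity
    · have h1 : ((k i : ℕ) : ℝ) + 1 ≤ N := by
        have := (k i).isLt
        exact_mod_cast Nat.succ_le_of_lt this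
      show ((κ k i : ℤ) : ℝ) ≤ Q ^ ((n:ℝ)⁻¹)
      rw [← hxdef]
      simp only [hκdef]
      push_cast
      linarith [hNx]
  set F : (Fin n → Fin N) → (Fin m → Fin M) := fun k i =>
    ⟨⌊(M:ℝ) * Int.fract (matVec B (fun j => ((κ k j : ℤ) : ℝ)) i)⌋₊, by
      rw [Nat.floor_lt (mul_nonneg (le_of_lt hMpos) (Int.fract_nonneg _))]
      calc (M:ℝ) * Int.fract (matVec B (fun j => ((κ k j : ℤ) : ℝ)) i)
          < (M:ℝ) * 1 := by
            exact mul_lt_mul_of_pos_left (Int.fract_lt_one _) hMpos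
        _ = M := mul_one _⟩ with hFdef
  obtain ⟨ka, kb, hkab, hFab⟩ := Fintype.exists_ne_map_eq_of_card_lt F
    (by simpa [Fintype.card_fun] using hcard)
  set A : Fin m → ℝ := matVec B (fun j => ((κ ka j : ℤ) : ℝ)) with hAdef
  set D : Fin m → ℝ := matVec B (fun j => ((κ kb j : ℤ) : ℝ)) with hDdef
  have hfrac : ∀ i, |Int.fract (A i) - Int.fract (D i)| < 1 / M := by
    intro i
    have hc : ⌊(M:ℝ) * Int.fract (A i)⌋₊ = ⌊(M:ℝ) * Int.fract (D i)⌋₊ := by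
      have := congrFun hFab i
      simpa [hFdef, Fin.mk.injEq, ← hAdef, ← hDdef] using this
    have h1 : ((⌊(M:ℝ) * Int.fract (A i)⌋₊ : ℕ) : ℝ) ≤ M * Int.fract (A i) :=
      Nat.floor_le (mul_nonneg hMpos.le (Int.fract_nonneg _))
    have h2 : (M:ℝ) * Int.fract (A i) < (⌊(M:ℝ) * Int.fract (A i)⌋₊ : ℕ) + 1 :=
      Nat.lt_floor_add_one _
    have h3 : ((⌊(M:ℝ) * Int.fract (A i)⌋₊ : ℕ) : ℝ) ≤ M * Int.fract (D i) := by
      rw [hc]; exact Nat.floor_le (mul_nonneg hMpos.le (Int.fract_nonneg _))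
    have h4 : (M:ℝ) * Int.fract (D i) < (⌊(M:ℝ) * Int.fract (A i)⌋₊ : ℕ) + 1 := by
      rw [hc]; exact Nat.lt_floor_add_one _
    rw [abs_sub_lt_iff]
    constructor <;> · rw [lt_div_iff₀ hMpos]; nlinarith
  set l : Fin m → ℤ := fun i => ⌊D i⌋ - ⌊A i⌋ with hldef
  set w : Fin m → ℝ := A + (fun i => ((l i : ℤ) : ℝ)) - D with hwdef
  have hwi : ∀ i, w i = Int.fract (A i) - Int.fract (D i) := by
    intro i
    simp only [hwdef, Pi.sub_apply, Pi.add_apply, hldef]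
    rw [← Int.self_sub_floor, ← Int.self_sub_floor]
    push_cast
    ring
  have hwbound : ∀ i, |w i| ≤ 1 / M := fun i => by rw [hwi i]; exact (hfrac i).le
  have hwne : w ≠ 0 := by
    set δ : Fin n → ℤ := fun j => κ ka j - κ kb j with hδdef
    have hδ : δ ≠ 0 := by
      intro h
      apply hkab
      funext j
      have := congrFun h j
      simp only [hδdef, Pi.zero_apply, sub_eq_zero, hκdef] at this
      have : ((ka j : ℕ) : ℤ) = ((kb j : ℕ) : ℤ) := by omega
      exact Fin.ext (by exact_mod_cast this)
    have hkey := hB δ l hδ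
    intro h0
    apply hkey
    funext i
    simp only [Pi.zero_apply]
    have h1 := congrFun h0 i
    simp only [hwdef, Pi.sub_apply, Pi.add_apply, Pi.zero_apply] at h1
    simp only [hδdef, matVec]
    push_cast
    simp only [mul_sub]
    have hAD2 : (∑ j, (B i j * ((κ ka j : ℤ) : ℝ) - B i j * ((κ kb j : ℤ) : ℝ))) = A i - D i := by
      simp only [hAdef, hDdef, matVec, Finset.sum_sub_distrib]
    rw [hAD2]
    linarith [h1]
  -- direction vector
  set r : ℝ := euclNorm w with hrdef
  have hr0 : 0 < r := by
    rw [hrdef, euclNorm, Real.sqrt_pos]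
    obtain ⟨i₀, hi₀⟩ := Function.ne_iff.mp hwne
    refine Finset.sum_pos' (fun i _ => sq_nonneg _) ⟨i₀, Finset.mem_univ _, ?_⟩
    have : w i₀ ≠ 0 := by simpa using hi₀
    positivity
  set u : Fin m → ℝ := r⁻¹ • w with hudef
  have hsq : r ^ 2 = ∑ i, w i ^ 2 := Real.sq_sqrt (Finset.sum_nonneg fun i _ => sq_nonneg _)
  have hu1 : euclNorm u = 1 := by
    rw [euclNorm]
    have : ∑ i, u i ^ 2 = 1 := by
      simp only [hudef, Pi.smul_apply, smul_eq_mul, mul_pow, ← Finset.mul_sum]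
      rw [← hsq]
      field_simp
    rw [this, Real.sqrt_one]
  have humem : u ∈ S ∪ (-S) := by
    rw [hSph]
    exact hu1
  -- the key bounding step
  have h1M : 1 / (M:ℝ) ≤ 2 * 4 ^ n * Q ^ (-(m:ℝ)⁻¹) := by
    have hyinv : y⁻¹ = ((4:ℝ) ^ n) ^ ((m:ℝ)⁻¹) * Q ^ (-(m:ℝ)⁻¹) := by
      rw [hydef, hbdef, Real.div_rpow hQ0.le (by positivity), Real.rpow_neg hQ0.le,
        inv_div, div_eq_mul_inv]
    have step1 : 1 / (M:ℝ) ≤ 1 / (y / 2) := one_div_le_one_div_of_le (by positivity) hMhalf.le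
    have step2 : 1 / (y / 2) = 2 * y⁻¹ := by field_simp
    have h4c : ((4:ℝ) ^ n) ^ ((m:ℝ)⁻¹) ≤ (4:ℝ) ^ n := by
      calc ((4:ℝ) ^ n) ^ ((m:ℝ)⁻¹) ≤ ((4:ℝ) ^ n) ^ (1:ℝ) := by
            refine Real.rpow_le_rpow_of_exponent_le (one_le_pow₀ (by norm_num)) ?_
            rw [inv_le_one_iff₀]
            right
            exact_mod_cast hm
        _ = (4:ℝ) ^ n := Real.rpow_one _
    calc 1 / (M:ℝ) ≤ 2 * y⁻¹ := by rw [← step2]; exact step1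
      _ = 2 * (((4:ℝ) ^ n) ^ ((m:ℝ)⁻¹) * Q ^ (-(m:ℝ)⁻¹)) := by rw [hyinv]
      _ ≤ 2 * ((4:ℝ) ^ n * Q ^ (-(m:ℝ)⁻¹)) := by
          have hQm : (0:ℝ) ≤ Q ^ (-(m:ℝ)⁻¹) := (Real.rpow_pos_of_pos hQ0 _).le
          nlinarith [mul_le_mul_of_nonneg_right h4c hQm]
      _ = 2 * 4 ^ n * Q ^ (-(m:ℝ)⁻¹) := by ring
  have key : ∀ (k1 k2 : Fin n → ℤ) (l' : Fin m → ℤ),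
      (∀ i, 0 < ((k1 i : ℤ) : ℝ) ∧ ((k1 i : ℤ) : ℝ) ≤ Q ^ ((n:ℝ)⁻¹)) →
      (∀ i, 0 < ((k2 i : ℤ) : ℝ) ∧ ((k2 i : ℤ) : ℝ) ≤ Q ^ ((n:ℝ)⁻¹)) →
      ((matVec B (fun j => (k1 j : ℝ)) + (fun i => (l' i : ℝ)) - matVec B (fun j => (k2 j : ℝ))) ∈ cone S) →
      (∀ i, |(matVec B (fun j => (k1 j : ℝ)) + (fun i => (l' i : ℝ)) - matVec B (fun j => (k2 j : ℝ))) i| ≤ 1 / M) →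
      (⨅ (k : Fin n → ℤ) (_ : ∀ i, 0 < (k i : ℝ) ∧ (k i : ℝ) ≤ Q ^ ((n : ℝ)⁻¹)),
          gap p S B Q (matVec B fun j => (k j : ℝ)))
        ≤ ENNReal.ofReal (2 * 4 ^ n * m * Q ^ (-(m:ℝ)⁻¹)) := by
    intro k1 k2 l' h1 h2 hcone hbd
    refine le_trans (iInf_le_of_le k2 (iInf_le_of_le h2 ?_)) le_rfl
    have hgap : gap p S B Q (matVec B fun j => (k2 j : ℝ))
        ≤ ENNReal.ofReal (lpNorm p (matVec B (fun j => (k1 j : ℝ)) + (fun i => (l' i : ℝ))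
            - matVec B (fun j => (k2 j : ℝ)))) := by
      unfold gap
      exact iInf_le_of_le k1 (iInf_le_of_le h1 (iInf_le_of_le l' (iInf_le_of_le hcone le_rfl)))
    refine le_trans hgap (ENNReal.ofReal_le_ofReal ?_)
    calc lpNorm p (matVec B (fun j => (k1 j : ℝ)) + (fun i => (l' i : ℝ))
            - matVec B (fun j => (k2 j : ℝ)))
        ≤ m * (1 / M) := lpNorm_le_aux p hp m hm _ _ (by positivity) hbd
      _ ≤ m * (2 * 4 ^ n * Q ^ (-(m:ℝ)⁻¹)) := by
          refine mul_le_mul_of_nonneg_left h1M (by positivity)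
      _ = 2 * 4 ^ n * m * Q ^ (-(m:ℝ)⁻¹) := by ring
  rcases humem with hu | hu
  · -- w ∈ cone S, use outer kb, inner ka, l
    refine key (κ ka) (κ kb) l (hκcond ka) (hκcond kb) ?_ ?_
    · refine ⟨u, hu, r, hr0, ?_⟩
      show w = r • u
      rw [hudef, smul_smul, mul_inv_cancel₀ hr0.ne', one_smul]
    · intro i
      exact hwbound i
  · -- -w ∈ cone S, use outer ka, inner kb, -l
    rw [Set.mem_neg] at hu
    have hwneg : (D + (fun i => (((-l) i : ℤ) : ℝ)) - A) = -w := by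
      funext i
      simp only [hwdef, Pi.neg_apply, Pi.sub_apply, Pi.add_apply]
      push_cast
      ring
    refine key (κ kb) (κ ka) (-l) (hκcond kb) (hκcond ka) ?_ ?_
    · show (D + (fun i => (((-l) i : ℤ) : ℝ)) - A) ∈ cone S
      rw [hwneg]
      refine ⟨-u, hu, r, hr0, ?_⟩
      rw [hudef, smul_neg, smul_smul, mul_inv_cancel₀ hr0.ne', one_smul]
    · intro i
      show |(D + (fun i => (((-l) i : ℤ) : ℝ)) - A) i| ≤ 1 / M
      rw [hwneg]
      simpa using hwbound i
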